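/- For every fixed r ∈ (0,1) there exists an integer N₀ such that for all N ≥ N₀, all α > 0 and all β with 0 ≤ β ≤ α/(N-1), the VSA attention entropy is strictly smaller than the SSA attention entropy: H(P_{N,r}) < H(Q_{N,α,β}). -/
import Mathlib

lemma sum_range_cast_id (N : ℕ) :
    ∑ i ∈ Finset.range N, (i : ℝ) = (N : ℝ) * ((N : ℝ) - 1) / 2 := by
  induction N with
  | zero => simp
  | succ n ih =>
      rw [Finset.sum_range_succ, ih]
      push_cast
      ring

lemma ssa_entropy_lb (N : ℕ) (hN : 3 ≤ N) (α β : ℝ) (hα : 0 < α) (hβ : 0 ≤ β)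
    (hβ' : β ≤ α / ((N : ℝ) - 1)) :
    Real.log N - Real.log 2 ≤
      -∑ Δ ∈ Finset.range N,
        ((α - β * Δ) / (α * N - β * N * ((N : ℝ) - 1) / 2)) *
          Real.log ((α - β * Δ) / (α * N - β * N * ((N : ℝ) - 1) / 2)) := by
  have hN3 : (3 : ℝ) ≤ (N : ℝ) := by exact_mod_cast hN
  have hNpos : (0 : ℝ) < N := by linarith
  set S : ℝ := α * N - β * N * ((N : ℝ) - 1) / 2 with hSdef
  have hβN : β * ((N : ℝ) - 1) ≤ α :=
    (le_div_iff₀ (by linarith : (0:ℝ) < (N:ℝ) - 1)).mp hβ'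
  have hS2 : (N : ℝ) * α / 2 ≤ S := by rw [hSdef]; nlinarith
  have hNα : (0 : ℝ) < (N : ℝ) * α := mul_pos hNpos hα
  have hSpos : 0 < S := by
    rw [hSdef]
    nlinarith [mul_le_mul_of_nonneg_right hβN hNpos.le, hNα]
  have hsum : ∑ Δ ∈ Finset.range N, (α - β * (Δ : ℝ)) = S := by
    rw [Finset.sum_sub_distrib, Finset.sum_const, ← Finset.mul_sum, sum_range_cast_id]
    simp only [Finset.card_range, nsmul_eq_mul, hSdef]
    ring
  have hQsum : ∑ Δ ∈ Finset.range N, (α - β * (Δ : ℝ)) / S = 1 := by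
    rw [← Finset.sum_div, hsum, div_self (ne_of_gt hSpos)]
  have hcast : ∀ Δ ∈ Finset.range N, (Δ : ℝ) ≤ (N : ℝ) - 1 := by
    intro Δ hΔ
    have h1 : Δ + 1 ≤ N := Finset.mem_range.mp hΔ
    have h2 : ((Δ : ℝ) + 1) ≤ (N : ℝ) := by exact_mod_cast h1
    linarith
  have hQnonneg : ∀ Δ ∈ Finset.range N, 0 ≤ (α - β * (Δ : ℝ)) / S := by
    intro Δ hΔ
    have := hcast Δ hΔ
    apply div_nonneg _ hSpos.le
    nlinarith
  have hQle : ∀ Δ ∈ Finset.range N, (α - β * (Δ : ℝ)) / S ≤ 2 / N := by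
    intro Δ hΔ
    rw [div_le_div_iff₀ hSpos hNpos, hSdef]
    have h0 : 0 ≤ β * (Δ : ℝ) := by positivity
    nlinarith [mul_nonneg h0 hNpos.le, mul_le_mul_of_nonneg_right hβN hNpos.le]
  have hterm : ∀ Δ ∈ Finset.range N,
      ((α - β * (Δ : ℝ)) / S) * (Real.log N - Real.log 2) ≤
        -(((α - β * (Δ : ℝ)) / S) * Real.log ((α - β * (Δ : ℝ)) / S)) := by
    intro Δ hΔ
    set q : ℝ := (α - β * (Δ : ℝ)) / S with hq
    rcases eq_or_lt_of_le (hQnonneg Δ hΔ) with h0 | h0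
    · have hq0 : q = 0 := hq.trans h0.symm
      simp [hq0]
    · have hlog : Real.log q ≤ Real.log 2 - Real.log N := by
        have := Real.log_le_log h0 (hQle Δ hΔ)
        rwa [Real.log_div (by norm_num) (ne_of_gt hNpos)] at this
      have hle : Real.log N - Real.log 2 ≤ -Real.log q := by linarith
      calc q * (Real.log N - Real.log 2) ≤ q * (-Real.log q) :=
            mul_le_mul_of_nonneg_left hle h0.le
        _ = -(q * Real.log q) := by ring
  calc Real.log N - Real.log 2
      = ∑ Δ ∈ Finset.range N, ((α - β * (Δ : ℝ)) / S) * (Real.log N - Real.log 2) := by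
        rw [← Finset.sum_mul, hQsum, one_mul]
    _ ≤ ∑ Δ ∈ Finset.range N,
          -(((α - β * (Δ : ℝ)) / S) * Real.log ((α - β * (Δ : ℝ)) / S)) :=
        Finset.sum_le_sum hterm
    _ = -∑ Δ ∈ Finset.range N,
          ((α - β * (Δ : ℝ)) / S) * Real.log ((α - β * (Δ : ℝ)) / S) := by
        rw [Finset.sum_neg_distrib]

lemma vsa_entropy_ub (r : ℝ) (hr0 : 0 < r) (hr1 : r < 1) (N : ℕ) (hN : 1 ≤ N) :
    -∑ Δ ∈ Finset.range N,
        ((1 - r) * r ^ Δ / (1 - r ^ N)) * Real.log ((1 - r) * r ^ Δ / (1 - r ^ N)) ≤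
      -Real.log (1 - r) + (-Real.log r) * (r / (1 - r) ^ 2) := by
  have hrN : r ^ N < 1 := pow_lt_one₀ hr0.le hr1 (by omega)
  have hrNpos : 0 < 1 - r ^ N := by linarith
  have h1r : 0 < 1 - r := by linarith
  set c : ℝ := (1 - r) / (1 - r ^ N) with hc
  have hcpos : 0 < c := div_pos h1r hrNpos
  have hc1 : c ≤ 1 := by
    rw [hc, div_le_one hrNpos]
    have h : r ^ N ≤ r := by
      have := pow_le_pow_of_le_one hr0.le hr1.le hN
      simpa using this
    linarith
  have hrw : ∀ Δ : ℕ, (1 - r) * r ^ Δ / (1 - r ^ N) = c * r ^ Δ := by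
    intro Δ; rw [hc]; ring
  have hlog : ∀ Δ : ℕ, Real.log (c * r ^ Δ) = Real.log c + (Δ : ℝ) * Real.log r := by
    intro Δ
    rw [Real.log_mul (ne_of_gt hcpos) (by positivity), Real.log_pow]
  have hA : ∑ Δ ∈ Finset.range N, r ^ Δ = (1 - r ^ N) / (1 - r) := by
    rw [geom_sum_eq (ne_of_lt hr1),
      div_eq_div_iff (sub_ne_zero.mpr (ne_of_lt hr1)) (ne_of_gt h1r)]
    ring
  have hcA : c * ∑ Δ ∈ Finset.range N, r ^ Δ = 1 := by
    rw [hA, hc]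
    field_simp
  set B : ℝ := ∑ Δ ∈ Finset.range N, (Δ : ℝ) * r ^ Δ with hBdef
  have hB : B ≤ r / (1 - r) ^ 2 := by
    have hnorm : ‖r‖ < 1 := by rw [Real.norm_eq_abs, abs_of_pos hr0]; exact hr1
    exact sum_le_hasSum (Finset.range N) (fun i _ => by positivity)
      (hasSum_coe_mul_geometric_of_norm_lt_one hnorm)
  have hBnn : 0 ≤ B := Finset.sum_nonneg fun i _ => by positivity
  have hexp : ∑ Δ ∈ Finset.range N,
      ((1 - r) * r ^ Δ / (1 - r ^ N)) * Real.log ((1 - r) * r ^ Δ / (1 - r ^ N))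
      = Real.log c + Real.log r * (c * B) := by
    have hcongr : ∀ Δ ∈ Finset.range N,
        ((1 - r) * r ^ Δ / (1 - r ^ N)) * Real.log ((1 - r) * r ^ Δ / (1 - r ^ N))
        = Real.log c * (c * r ^ Δ) + Real.log r * (c * ((Δ : ℝ) * r ^ Δ)) := by
      intro Δ _
      rw [hrw, hlog]
      ring
    rw [Finset.sum_congr rfl hcongr, Finset.sum_add_distrib, ← Finset.mul_sum,
      ← Finset.mul_sum, ← Finset.mul_sum, ← Finset.mul_sum, hcA, mul_one, hBdef]
  rw [hexp]
  have hlogc : -Real.log c ≤ -Real.log (1 - r) := by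
    rw [hc, Real.log_div (ne_of_gt h1r) (ne_of_gt hrNpos)]
    have hp : 0 < r ^ N := pow_pos hr0 N
    have : Real.log (1 - r ^ N) ≤ 0 := Real.log_nonpos hrNpos.le (by linarith)
    linarith
  have hlogr : Real.log r < 0 := Real.log_neg hr0 hr1
  have hcB : c * B ≤ r / (1 - r) ^ 2 := by
    calc c * B ≤ 1 * B := mul_le_mul_of_nonneg_right hc1 hBnn
      _ = B := one_mul B
      _ ≤ r / (1 - r) ^ 2 := hB
  have h2 : -(Real.log r * (c * B)) ≤ (-Real.log r) * (r / (1 - r) ^ 2) := by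
    have := mul_le_mul_of_nonneg_left hcB (by linarith : (0:ℝ) ≤ -Real.log r)
    linarith
  linarith

/-- For every fixed `r ∈ (0,1)` there is an `N₀` such that for all
`N ≥ N₀`, all `α > 0` and all `β ∈ [0, α/(N-1)]`, the VSA attention entropy is strictly
smaller than the SSA attention entropy: `H(P_{N,r}) < H(Q_{N,α,β})`. -/
theorem vsa_entropy_lt_ssa (r : ℝ) (hr : r ∈ Set.Ioo (0 : ℝ) 1) :
    ∃ N₀ : ℕ, ∀ N : ℕ, N₀ ≤ N →
      ∀ α β : ℝ, 0 < α → 0 ≤ β → β ≤ α / ((N : ℝ) - 1) →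
        -∑ Δ ∈ Finset.range N,
            ((1 - r) * r ^ Δ / (1 - r ^ N)) * Real.log ((1 - r) * r ^ Δ / (1 - r ^ N)) <
          -∑ Δ ∈ Finset.range N,
            ((α - β * Δ) / (α * N - β * N * ((N : ℝ) - 1) / 2)) *
              Real.log ((α - β * Δ) / (α * N - β * N * ((N : ℝ) - 1) / 2)) := by
  obtain ⟨hr0, hr1⟩ := hr
  set C : ℝ := -Real.log (1 - r) + (-Real.log r) * (r / (1 - r) ^ 2) with hC
  refine ⟨max 3 (⌈Real.exp (C + Real.log 2)⌉₊ + 1), fun N hNge α β hα hβ hβ' => ?_⟩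
  have hN3 : 3 ≤ N := le_trans (le_max_left _ _) hNge
  have hNbig : Real.exp (C + Real.log 2) < (N : ℝ) := by
    have h1 : ⌈Real.exp (C + Real.log 2)⌉₊ + 1 ≤ N := le_trans (le_max_right _ _) hNge
    have h2 : Real.exp (C + Real.log 2) ≤ (⌈Real.exp (C + Real.log 2)⌉₊ : ℝ) :=
      Nat.le_ceil _
    have h3 : ((⌈Real.exp (C + Real.log 2)⌉₊ : ℝ) + 1) ≤ (N : ℝ) := by exact_mod_cast h1
    linarith
  have hNpos : (0 : ℝ) < N := lt_trans (Real.exp_pos _) hNbig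
  have hmid : C < Real.log N - Real.log 2 := by
    have := (Real.lt_log_iff_exp_lt hNpos).mpr hNbig
    linarith
  calc -∑ Δ ∈ Finset.range N,
        ((1 - r) * r ^ Δ / (1 - r ^ N)) * Real.log ((1 - r) * r ^ Δ / (1 - r ^ N))
      ≤ C := vsa_entropy_ub r hr0 hr1 N (by omega)
    _ < Real.log N - Real.log 2 := hmid
    _ ≤ _ := ssa_entropy_lb N hN3 α β hα hβ hβ'
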